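/- For K ∈ Ω^{k+1}(M;TM) the following identities of operators on Ω(M) hold: h*∘i(K) = i^h(K∘Λ^{k+1}h) = h*∘i^h(K); i(K)∘h* = i^h(h∘K) = i^h(K)∘h*; [i(K), h*] = [i^h(K), h*] = i^h(h∘K − K∘Λ^{k+1}h); and h*∘i(K)∘h* = h*∘i^h(K)∘h* = i^h(h∘K∘Λ^{k+1}h). -/

import Mathlib

/-!
Graded derivations of the algebra of differential forms associated with a connection
(P. Michor).  We model vector fields on a smooth manifold `M` as derivations of the
commutative `ℝ`-algebra `A = C^∞(M, ℝ)` (realized inside `Module.End ℝ A`), and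
differential forms (scalar valued, resp. tangent-bundle valued) as functions on lists of
vector fields which are alternating `A`-multilinear of a fixed degree.  All the operators
of the Frölicher-Nijenhuis calculus are defined by their classical global formulas.
-/

noncomputable section

open scoped Manifold

variable (A : Type*) [CommRing A] [Algebra ℝ A]

/-- The carrier in which vector fields live: `ℝ`-linear endomorphisms of the functions. -/
abbrev Vec := Module.End ℝ A

/-- A vector field is a derivation of the algebra of (smooth) functions. -/
def IsVectorField (X : Vec A) : Prop := ∀ f g : A, X (f * g) = f * X g + g * X f

/-- Raw scalar differential forms: functions on lists of vector fields. -/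
abbrev SF := List (Vec A) → A

/-- Raw tangent-bundle valued differential forms. -/
abbrev VF := List (Vec A) → Vec A

/-- All members of the list are genuine vector fields. -/
def VFList (ℓ : List (Vec A)) : Prop := ∀ X ∈ ℓ, IsVectorField A X

/-- `ω` is a (scalar valued) differential `p`-form: it is supported on lists of length
`p`, it is `A`-multilinear and alternating (on vector fields). -/
structure IsSForm (p : ℕ) (ω : SF A) : Prop where
  support : ∀ ℓ, ℓ.length ≠ p → ω ℓ = 0
  map_add : ∀ l₁ (X Y : Vec A) l₂, VFList A l₁ → VFList A l₂ →
    IsVectorField A X → IsVectorField A Y →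
    ω (l₁ ++ (X + Y) :: l₂) = ω (l₁ ++ X :: l₂) + ω (l₁ ++ Y :: l₂)
  map_smul : ∀ l₁ (f : A) (X : Vec A) l₂, VFList A l₁ → VFList A l₂ →
    IsVectorField A X → ω (l₁ ++ (f • X) :: l₂) = f * ω (l₁ ++ X :: l₂)
  alternate : ∀ l₁ (X : Vec A) l₂ l₃, VFList A l₁ → VFList A l₂ → VFList A l₃ →
    IsVectorField A X → ω (l₁ ++ X :: l₂ ++ X :: l₃) = 0

/-- `K` is a tangent-bundle valued differential `p`-form, `K ∈ Ω^p(M; TM)`. -/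
structure IsVForm (p : ℕ) (K : VF A) : Prop where
  support : ∀ ℓ, ℓ.length ≠ p → K ℓ = 0
  map_add : ∀ l₁ (X Y : Vec A) l₂, VFList A l₁ → VFList A l₂ →
    IsVectorField A X → IsVectorField A Y →
    K (l₁ ++ (X + Y) :: l₂) = K (l₁ ++ X :: l₂) + K (l₁ ++ Y :: l₂)
  map_smul : ∀ l₁ (f : A) (X : Vec A) l₂, VFList A l₁ → VFList A l₂ →
    IsVectorField A X → K (l₁ ++ (f • X) :: l₂) = f • K (l₁ ++ X :: l₂)
  alternate : ∀ l₁ (X : Vec A) l₂ l₃, VFList A l₁ → VFList A l₂ → VFList A l₃ →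
    IsVectorField A X → K (l₁ ++ X :: l₂ ++ X :: l₃) = 0
  vec : ∀ ℓ, VFList A ℓ → IsVectorField A (K ℓ)

/-- A connection for a sub vector bundle `F ⊆ TM`:  a fiber linear projection
`φ : TM → F`, i.e. an idempotent `A`-linear operator on vector fields (whose image is the
space of sections of `F`). -/
structure IsConnection (φ : Vec A → Vec A) : Prop where
  vf : ∀ X, IsVectorField A X → IsVectorField A (φ X)
  idem : ∀ X, IsVectorField A X → φ (φ X) = φ X
  map_add : ∀ X Y, IsVectorField A X → IsVectorField A Y → φ (X + Y) = φ X + φ Y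
  map_smul : ∀ (f : A) (X : Vec A), IsVectorField A X → φ (f • X) = f • φ X

/-- The horizontal projection `h = Id - φ` of a connection `φ`. -/
def hpr (φ : Vec A → Vec A) : Vec A → Vec A := fun X => X - φ X

/-- A bundle endomorphism of `TM` (e.g. `φ` or `h`) viewed as a `1`-form in `Ω¹(M;TM)`. -/
def oneF (φ : Vec A → Vec A) : VF A := fun ℓ => match ℓ with
  | [X] => φ X
  | _ => 0

/-- The curvature `R ∈ Ω²(M;TM)` of the connection, `R(X,Y) = φ [hX, hY]`. -/
def curv (φ : Vec A → Vec A) : VF A := fun ℓ => match ℓ with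
  | [X, Y] => φ ⁅hpr A φ X, hpr A φ Y⁆
  | _ => 0

/-- The cocurvature `R̄ ∈ Ω²(M;TM)` of the connection, `R̄(X,Y) = h [φX, φY]`. -/
def cocurv (φ : Vec A → Vec A) : VF A := fun ℓ => match ℓ with
  | [X, Y] => hpr A φ ⁅φ X, φ Y⁆
  | _ => 0

/-- `h* : Ω(M) → Ω(M)`, `(h*ω)(X₁,…,X_p) = ω(hX₁,…,hX_p)`. -/
def hstar (φ : Vec A → Vec A) : SF A →ₗ[ℝ] SF A :=
  LinearMap.pi fun ℓ => LinearMap.proj (ℓ.map (hpr A φ))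

/-- The exterior derivative, by the global (Koszul) formula. -/
def extd : SF A →ₗ[ℝ] SF A :=
  LinearMap.pi fun ℓ =>
    (∑ i : Fin ℓ.length, ((-1 : ℝ) ^ (i : ℕ)) •
      ((ℓ.get i) ∘ₗ (LinearMap.proj (ℓ.eraseIdx (i : ℕ)) : SF A →ₗ[ℝ] A)))
    + ∑ i : Fin ℓ.length,
        ∑ j ∈ Finset.univ.filter (fun j : Fin ℓ.length => (i : ℕ) < (j : ℕ)),
          ((-1 : ℝ) ^ ((i : ℕ) + (j : ℕ))) •
            (LinearMap.proj ((⁅ℓ.get i, ℓ.get j⁆ : Vec A) ::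
              ((ℓ.eraseIdx (j : ℕ)).eraseIdx (i : ℕ))) : SF A →ₗ[ℝ] A)

/-- The insertion operator `i(K) : Ω^p(M) → Ω^{p+k-1}(M)` of `K ∈ Ω^k(M;TM)`:
`(i(K)ω)(X₁,…,X_n) = 1/(k! (n-k)!) ∑_σ ε(σ) ω(K(X_{σ1},…,X_{σk}), X_{σ(k+1)},…)`. -/
def insS (k : ℕ) (K : VF A) : SF A →ₗ[ℝ] SF A :=
  LinearMap.pi fun ℓ =>
    if hk : k ≤ ℓ.length then
      (((k.factorial * (ℓ.length - k).factorial : ℕ) : ℝ))⁻¹ •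
        ∑ σ : Equiv.Perm (Fin ℓ.length),
          (((Equiv.Perm.sign σ : ℤ) : ℝ)) •
            (LinearMap.proj
              ((K (List.ofFn fun m : Fin k => ℓ.get (σ (Fin.castLE hk m)))) ::
                List.ofFn fun m : Fin (ℓ.length - k) =>
                  ℓ.get (σ ⟨k + (m : ℕ), by have := m.isLt; omega⟩)) : SF A →ₗ[ℝ] A)
    else 0

/-- The insertion operator over `h*`:  `i^h(K)` of `K ∈ Ω^k(M;TM)`, given by
`(i^h(K)ω)(X₁,…,X_n) = 1/(k! (n-k)!) ∑_σ ε(σ) ω(K(X_{σ1},…,X_{σk}), hX_{σ(k+1)},…)`. -/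
def insH (φ : Vec A → Vec A) (k : ℕ) (K : VF A) : SF A →ₗ[ℝ] SF A :=
  LinearMap.pi fun ℓ =>
    if hk : k ≤ ℓ.length then
      (((k.factorial * (ℓ.length - k).factorial : ℕ) : ℝ))⁻¹ •
        ∑ σ : Equiv.Perm (Fin ℓ.length),
          (((Equiv.Perm.sign σ : ℤ) : ℝ)) •
            (LinearMap.proj
              ((K (List.ofFn fun m : Fin k => ℓ.get (σ (Fin.castLE hk m)))) ::
                List.ofFn fun m : Fin (ℓ.length - k) =>
                  hpr A φ (ℓ.get (σ ⟨k + (m : ℕ), by have := m.isLt; omega⟩))) : SF A →ₗ[ℝ] A)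
    else 0

/-- Insertion `i(K)T` of `K ∈ Ω^k(M;TM)` into a vector valued form `T`. -/
def insVV (k : ℕ) (K : VF A) (T : VF A) : VF A := fun ℓ =>
  if hk : k ≤ ℓ.length then
    (((k.factorial * (ℓ.length - k).factorial : ℕ) : ℝ))⁻¹ •
      ∑ σ : Equiv.Perm (Fin ℓ.length),
        (((Equiv.Perm.sign σ : ℤ) : ℝ)) •
          T ((K (List.ofFn fun m : Fin k => ℓ.get (σ (Fin.castLE hk m)))) ::
              List.ofFn fun m : Fin (ℓ.length - k) =>
                ℓ.get (σ ⟨k + (m : ℕ), by have := m.isLt; omega⟩))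
  else 0

/-- Insertion over `h*`, `i^h(K)T`, of `K ∈ Ω^k(M;TM)` into a vector valued form `T`. -/
def insHVV (φ : Vec A → Vec A) (k : ℕ) (K : VF A) (T : VF A) : VF A := fun ℓ =>
  if hk : k ≤ ℓ.length then
    (((k.factorial * (ℓ.length - k).factorial : ℕ) : ℝ))⁻¹ •
      ∑ σ : Equiv.Perm (Fin ℓ.length),
        (((Equiv.Perm.sign σ : ℤ) : ℝ)) •
          T ((K (List.ofFn fun m : Fin k => ℓ.get (σ (Fin.castLE hk m)))) ::
              List.ofFn fun m : Fin (ℓ.length - k) =>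
                hpr A φ (ℓ.get (σ ⟨k + (m : ℕ), by have := m.isLt; omega⟩)))
  else 0

/-- The Lie derivative `Θ(K) = [i(K), d]` along `K ∈ Ω^k(M;TM)`. -/
def theta (k : ℕ) (K : VF A) : SF A →ₗ[ℝ] SF A :=
  insS A k K ∘ₗ extd A - ((-1 : ℝ) ^ (k + 1)) • (extd A ∘ₗ insS A k K)

/-- `Θ^h(K) = h* ∘ Θ(K) ∘ h*`. -/
def thetaH (φ : Vec A → Vec A) (k : ℕ) (K : VF A) : SF A →ₗ[ℝ] SF A :=
  hstar A φ ∘ₗ theta A k K ∘ₗ hstar A φ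

/-- A function, viewed as a `0`-form. -/
def constF : A →ₗ[ℝ] SF A where
  toFun f := fun ℓ => match ℓ with
    | [] => f
    | _ => 0
  map_add' f g := by funext ℓ; cases ℓ <;> simp
  map_smul' r f := by funext ℓ; cases ℓ <;> simp

/-- The Frölicher-Nijenhuis bracket `[K, L] ∈ Ω^{k+l}(M;TM)` of `K ∈ Ω^k(M;TM)` and
`L ∈ Ω^l(M;TM)`, characterized by `Θ([K,L]) = [Θ(K), Θ(L)]` via
`[K,L](X₁,…,X_{k+l}) f = ([Θ(K),Θ(L)] f)(X₁,…,X_{k+l})`. -/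
def fnb (k l : ℕ) (K L : VF A) : VF A := fun ℓ =>
  LinearMap.proj ℓ ∘ₗ
    (theta A k K ∘ₗ theta A l L - ((-1 : ℝ) ^ (k * l)) • (theta A l L ∘ₗ theta A k K)) ∘ₗ
      constF A

/-- Wedge product of a scalar `p`-form with a scalar form. -/
def wedgeSS (p : ℕ) (ω ψ : SF A) : SF A := fun ℓ =>
  if hp : p ≤ ℓ.length then
    (((p.factorial * (ℓ.length - p).factorial : ℕ) : ℝ))⁻¹ •
      ∑ σ : Equiv.Perm (Fin ℓ.length),
        (((Equiv.Perm.sign σ : ℤ) : ℝ)) •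
          (ω (List.ofFn fun m : Fin p => ℓ.get (σ (Fin.castLE hp m))) *
            ψ (List.ofFn fun m : Fin (ℓ.length - p) =>
                ℓ.get (σ ⟨p + (m : ℕ), by have := m.isLt; omega⟩)))
  else 0

/-- Wedge product of a scalar `p`-form with a vector valued form. -/
def wedgeSV (p : ℕ) (ω : SF A) (K : VF A) : VF A := fun ℓ =>
  if hp : p ≤ ℓ.length then
    (((p.factorial * (ℓ.length - p).factorial : ℕ) : ℝ))⁻¹ •
      ∑ σ : Equiv.Perm (Fin ℓ.length),
        (((Equiv.Perm.sign σ : ℤ) : ℝ)) •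
          (ω (List.ofFn fun m : Fin p => ℓ.get (σ (Fin.castLE hp m))) •
            K (List.ofFn fun m : Fin (ℓ.length - p) =>
                ℓ.get (σ ⟨p + (m : ℕ), by have := m.isLt; omega⟩)))
  else 0

/-- `K ∘ Λh`: precompose each argument of a vector valued form with `h`. -/
def precH (φ : Vec A → Vec A) (K : VF A) : VF A := fun ℓ => K (ℓ.map (hpr A φ))

/-- `h ∘ K`: postcompose the values of a vector valued form with `h`. -/
def postH (φ : Vec A → Vec A) (K : VF A) : VF A := fun ℓ => hpr A φ (K ℓ)

/-- `φ ∘ K`: postcompose the values of a vector valued form with `φ`. -/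
def postP (φ : Vec A → Vec A) (K : VF A) : VF A := fun ℓ => φ (K ℓ)

/-- Equality of vector valued forms (tested on vector fields). -/
def VEq (K L : VF A) : Prop := ∀ ℓ, VFList A ℓ → K ℓ = L ℓ

/-- Equality of operators on `Ω(M)` (tested on genuine forms and vector fields). -/
def OpEq (D₁ D₂ : SF A →ₗ[ℝ] SF A) : Prop :=
  ∀ (p : ℕ) (ω : SF A), IsSForm A p ω → ∀ ℓ, VFList A ℓ → D₁ ω ℓ = D₂ ω ℓ

/-- A scalar form is horizontal: it is killed by insertion of any vertical vector. -/
def HorS (φ : Vec A → Vec A) (ω : SF A) : Prop :=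
  ∀ l₁ (Y : Vec A) l₂, IsVectorField A Y → ω (l₁ ++ φ Y :: l₂) = 0

/-- A vector valued form is horizontal: it is killed by any vertical argument. -/
def HorV (φ : Vec A → Vec A) (K : VF A) : Prop :=
  ∀ l₁ (Y : Vec A) l₂, IsVectorField A Y → K (l₁ ++ φ Y :: l₂) = 0

/-- `K ∈ Ω^k(M;TM)^h`, i.e. `h ∘ K = K ∘ Λ^k h`. -/
def EquivH (φ : Vec A → Vec A) (K : VF A) : Prop :=
  ∀ ℓ, VFList A ℓ → hpr A φ (K ℓ) = K (ℓ.map (hpr A φ))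

/-- `D` is a graded derivation of `Ω(M)` over `h*` of degree `k`:
`D(ω ∧ ψ) = Dω ∧ h*ψ + (-1)^{k·|ω|} h*ω ∧ Dψ`. -/
structure IsDerOverH (φ : Vec A → Vec A) (k : ℕ) (D : SF A →ₗ[ℝ] SF A) : Prop where
  degree : ∀ p ω, IsSForm A p ω → IsSForm A (p + k) (D ω)
  leibniz : ∀ (p q : ℕ) (ω ψ : SF A), IsSForm A p ω → IsSForm A q ψ →
    D (wedgeSS A p ω ψ) = wedgeSS A (p + k) (D ω) (hstar A φ ψ)
      + ((-1 : ℝ) ^ (k * p)) • wedgeSS A p (hstar A φ ω) (D ψ)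

/-- `D` commutes with `h*` (i.e. `[D, h*] = 0` on `Ω(M)`). -/
def CommutesWithHstar (φ : Vec A → Vec A) (D : SF A →ₗ[ℝ] SF A) : Prop :=
  ∀ (p : ℕ) (ω : SF A), IsSForm A p ω → ∀ ℓ, VFList A ℓ →
    D (hstar A φ ω) ℓ = hstar A φ (D ω) ℓ

/-- `D` is algebraic: it vanishes on `Ω⁰(M)`. -/
def AlgebraicDer (D : SF A →ₗ[ℝ] SF A) : Prop := ∀ ω : SF A, IsSForm A 0 ω → D ω = 0

/-- The bracket `[K,L]^{∧,h} = i^h(K)L - (-1)^{kl} i^h(L)K` on `Ω^{*+1}(M;TM)^h`,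
for `K ∈ Ω^{k+1}(M;TM)^h` and `L ∈ Ω^{l+1}(M;TM)^h`. -/
def hookBr (φ : Vec A → Vec A) (k l : ℕ) (K L : VF A) : VF A :=
  insHVV A φ (k + 1) K L - ((-1 : ℝ) ^ (k * l)) • insHVV A φ (l + 1) L K

/-- The classical covariant derivative `D^h = h* ∘ d`. -/
def covD (φ : Vec A → Vec A) : SF A →ₗ[ℝ] SF A := hstar A φ ∘ₗ extd A

/-- The covariant derivative `d^h = h* ∘ d ∘ h*`. -/
def covd (φ : Vec A → Vec A) : SF A →ₗ[ℝ] SF A := hstar A φ ∘ₗ extd A ∘ₗ hstar A φ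

end

/-- The commutative `ℝ`-algebra of smooth real valued functions on a manifold `M`. -/
abbrev SmoothFns {EM : Type*} [NormedAddCommGroup EM] [NormedSpace ℝ EM]
    {HM : Type*} [TopologicalSpace HM] (IM : ModelWithCorners ℝ EM HM)
    (M : Type*) [TopologicalSpace M] [ChartedSpace HM M] : Type _ :=
  ContMDiffMap IM (modelWithCornersSelf ℝ ℝ) M ℝ (⊤ : ℕ∞)

section Aux

variable {A : Type*} [CommRing A] [Algebra ℝ A]

lemma vf_sub {X Y : Vec A} (hX : IsVectorField A X) (hY : IsVectorField A Y) :
    IsVectorField A (X - Y) := by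
  intro f g
  have hx := hX f g
  have hy := hY f g
  simp only [LinearMap.sub_apply]
  rw [hx, hy]
  ring

lemma vf_hpr {φ : Vec A → Vec A} (hφ : IsConnection A φ) {X : Vec A}
    (hX : IsVectorField A X) : IsVectorField A (hpr A φ X) :=
  vf_sub hX (hφ.vf X hX)

lemma phi_hpr {φ : Vec A → Vec A} (hφ : IsConnection A φ) {X : Vec A}
    (hX : IsVectorField A X) : φ (hpr A φ X) = 0 := by
  have h2 := hφ.map_add (X - φ X) (φ X) (vf_sub hX (hφ.vf X hX)) (hφ.vf X hX)
  rw [sub_add_cancel, hφ.idem X hX] at h2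
  exact right_eq_add.mp h2

lemma hpr_idem {φ : Vec A → Vec A} (hφ : IsConnection A φ) {X : Vec A}
    (hX : IsVectorField A X) : hpr A φ (hpr A φ X) = hpr A φ X := by
  show hpr A φ X - φ (hpr A φ X) = hpr A φ X
  rw [phi_hpr hφ hX, sub_zero]

lemma vflist_ofFn {n : ℕ} {g : Fin n → Vec A} (hg : ∀ i, IsVectorField A (g i)) :
    VFList A (List.ofFn g) := by
  intro X hX
  rw [List.mem_ofFn] at hX
  obtain ⟨i, rfl⟩ := hX
  exact hg i

/-- The common shape of all the insertion operators evaluated on a list. -/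
noncomputable def Ee (ω : SF A) (K1 : VF A) (b : Vec A → Vec A) (k n : ℕ) (hk : k ≤ n)
    (v : Fin n → Vec A) : A :=
  (((k.factorial * (n - k).factorial : ℕ) : ℝ))⁻¹ •
    ∑ σ : Equiv.Perm (Fin n),
      (((Equiv.Perm.sign σ : ℤ) : ℝ)) •
        ω ((K1 (List.ofFn fun m : Fin k => v (σ (Fin.castLE hk m)))) ::
            List.ofFn fun m : Fin (n - k) =>
              b (v (σ ⟨k + (m : ℕ), by have := m.isLt; omega⟩)))

lemma insS_apply (k : ℕ) (K : VF A) (ω : SF A) (ℓ : List (Vec A)) (hk : k ≤ ℓ.length) :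
    insS A k K ω ℓ = Ee ω K id k ℓ.length hk ℓ.get := by
  simp only [insS, LinearMap.pi_apply, dif_pos hk, LinearMap.smul_apply,
    LinearMap.sum_apply, LinearMap.proj_apply, Ee, id_eq]

lemma insH_apply (φ : Vec A → Vec A) (k : ℕ) (K : VF A) (ω : SF A) (ℓ : List (Vec A))
    (hk : k ≤ ℓ.length) :
    insH A φ k K ω ℓ = Ee ω K (hpr A φ) k ℓ.length hk ℓ.get := by
  simp only [insH, LinearMap.pi_apply, dif_pos hk, LinearMap.smul_apply,
    LinearMap.sum_apply, LinearMap.proj_apply, Ee]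

lemma insS_zero (k : ℕ) (K : VF A) (ω : SF A) (ℓ : List (Vec A)) (hk : ¬ k ≤ ℓ.length) :
    insS A k K ω ℓ = 0 := by
  simp only [insS, LinearMap.pi_apply, dif_neg hk, LinearMap.zero_apply]

lemma insH_zero (φ : Vec A → Vec A) (k : ℕ) (K : VF A) (ω : SF A) (ℓ : List (Vec A))
    (hk : ¬ k ≤ ℓ.length) : insH A φ k K ω ℓ = 0 := by
  simp only [insH, LinearMap.pi_apply, dif_neg hk, LinearMap.zero_apply]

lemma hstar_apply (φ : Vec A → Vec A) (ω : SF A) (ℓ : List (Vec A)) :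
    hstar A φ ω ℓ = ω (ℓ.map (hpr A φ)) := rfl

lemma Ee_cast {m n : ℕ} (h : m = n) (ω : SF A) (K1 : VF A) (b : Vec A → Vec A) (k : ℕ)
    (hk : k ≤ m) (hk' : k ≤ n) (v : Fin m → Vec A) (w : Fin n → Vec A)
    (hvw : ∀ i : Fin m, v i = w (Fin.cast h i)) :
    Ee ω K1 b k m hk v = Ee ω K1 b k n hk' w := by
  subst h
  have hv : v = w := funext fun i => by simpa using hvw i
  subst hv
  rfl

lemma Ee_precomp (f : Vec A → Vec A) (ω : SF A) (K1 : VF A) (b : Vec A → Vec A)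
    (k n : ℕ) (hk : k ≤ n) (v : Fin n → Vec A) :
    Ee ω K1 b k n hk (fun i => f (v i)) =
      Ee ω (fun L => K1 (L.map f)) (fun X => b (f X)) k n hk v := by
  unfold Ee
  congr 1
  refine Finset.sum_congr rfl fun σ _ => ?_
  simp only [List.map_ofFn, Function.comp_def]

lemma Ee_hstar (φ : Vec A → Vec A) (ω : SF A) (K1 : VF A) (b : Vec A → Vec A)
    (k n : ℕ) (hk : k ≤ n) (v : Fin n → Vec A) :
    Ee (hstar A φ ω) K1 b k n hk v =
      Ee ω (fun L => hpr A φ (K1 L)) (fun X => hpr A φ (b X)) k n hk v := by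
  unfold Ee
  congr 1
  refine Finset.sum_congr rfl fun σ _ => ?_
  rw [hstar_apply]
  simp only [List.map_cons, List.map_ofFn, Function.comp_def]

lemma Ee_congr_b (ω : SF A) (K1 : VF A) (b b' : Vec A → Vec A) (k n : ℕ) (hk : k ≤ n)
    (v : Fin n → Vec A) (hb : ∀ i, b (v i) = b' (v i)) :
    Ee ω K1 b k n hk v = Ee ω K1 b' k n hk v := by
  unfold Ee
  simp only [hb]

lemma insS_map_apply (f : Vec A → Vec A) (k : ℕ) (K : VF A) (ω : SF A)
    (ℓ : List (Vec A)) (hk : k ≤ ℓ.length) :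
    insS A k K ω (ℓ.map f) =
      Ee ω (fun L => K (L.map f)) (fun X => f X) k ℓ.length hk ℓ.get := by
  have h : (ℓ.map f).length = ℓ.length := by simp
  have hk2 : k ≤ (ℓ.map f).length := by rw [h]; exact hk
  rw [insS_apply k K ω _ hk2,
    Ee_cast h ω K id k hk2 hk _ (fun i => f (ℓ.get i))
      (fun i => by simp [List.get_eq_getElem])]
  exact Ee_precomp f ω K id k ℓ.length hk ℓ.get

lemma insH_map_apply (φ : Vec A → Vec A) (f : Vec A → Vec A) (k : ℕ) (K : VF A)
    (ω : SF A) (ℓ : List (Vec A)) (hk : k ≤ ℓ.length) :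
    insH A φ k K ω (ℓ.map f) =
      Ee ω (fun L => K (L.map f)) (fun X => hpr A φ (f X)) k ℓ.length hk ℓ.get := by
  have h : (ℓ.map f).length = ℓ.length := by simp
  have hk2 : k ≤ (ℓ.map f).length := by rw [h]; exact hk
  rw [insH_apply φ k K ω _ hk2,
    Ee_cast h ω K (hpr A φ) k hk2 hk _ (fun i => f (ℓ.get i))
      (fun i => by simp [List.get_eq_getElem])]
  exact Ee_precomp f ω K (hpr A φ) k ℓ.length hk ℓ.get

lemma form_sub_head {p : ℕ} {ω : SF A} (hω : IsSForm A p ω) {Z₁ Z₂ : Vec A}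
    (h1 : IsVectorField A Z₁) (h2 : IsVectorField A Z₂) (tail : List (Vec A))
    (ht : VFList A tail) : ω ((Z₁ - Z₂) :: tail) = ω (Z₁ :: tail) - ω (Z₂ :: tail) := by
  have h := hω.map_add [] (Z₁ - Z₂) Z₂ tail (by intro X hX; simp at hX) ht
    (vf_sub h1 h2) h2
  rw [sub_add_cancel] at h
  simp only [List.nil_append] at h
  rw [h]
  ring

lemma Ee_sub {p : ℕ} {ω : SF A} (hω : IsSForm A p ω) (K1 K2 : VF A)
    (hK1 : ∀ L, VFList A L → IsVectorField A (K1 L))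
    (hK2 : ∀ L, VFList A L → IsVectorField A (K2 L))
    (b : Vec A → Vec A) (k n : ℕ) (hk : k ≤ n) (v : Fin n → Vec A)
    (hv : ∀ i, IsVectorField A (v i)) (hbv : ∀ i, IsVectorField A (b (v i))) :
    Ee ω (K1 - K2) b k n hk v = Ee ω K1 b k n hk v - Ee ω K2 b k n hk v := by
  unfold Ee
  rw [← smul_sub, ← Finset.sum_sub_distrib]
  congr 1
  refine Finset.sum_congr rfl fun σ _ => ?_
  rw [← smul_sub]
  congr 1
  have harg : VFList A (List.ofFn fun m : Fin k => v (σ (Fin.castLE hk m))) :=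
    vflist_ofFn fun i => hv _
  have htail : VFList A (List.ofFn fun m : Fin (n - k) =>
      b (v (σ ⟨k + (m : ℕ), by have := m.isLt; omega⟩))) :=
    vflist_ofFn fun i => hbv _
  exact form_sub_head hω (hK1 _ harg) (hK2 _ harg) _ htail

end Aux
section Vals

variable {A : Type*} [CommRing A] [Algebra ℝ A]

lemma hget_vf {ℓ : List (Vec A)} (hℓ : VFList A ℓ) (i : Fin ℓ.length) :
    IsVectorField A (ℓ.get i) := hℓ _ (List.get_mem ℓ i)

lemma val1 (φ : Vec A → Vec A) (k : ℕ) (K : VF A) (ω : SF A) (ℓ : List (Vec A))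
    (hk : k ≤ ℓ.length) :
    (hstar A φ ∘ₗ insS A k K) ω ℓ = Ee ω (precH A φ K) (hpr A φ) k ℓ.length hk ℓ.get := by
  show insS A k K ω (ℓ.map (hpr A φ)) = _
  exact insS_map_apply (hpr A φ) k K ω ℓ hk

lemma val2 (φ : Vec A → Vec A) (k : ℕ) (K : VF A) (ω : SF A) (ℓ : List (Vec A))
    (hk : k ≤ ℓ.length) :
    insH A φ k (precH A φ K) ω ℓ =
      Ee ω (precH A φ K) (hpr A φ) k ℓ.length hk ℓ.get :=
  insH_apply φ k _ ω ℓ hk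

lemma val3 {φ : Vec A → Vec A} (hφ : IsConnection A φ) (k : ℕ) (K : VF A) (ω : SF A)
    {ℓ : List (Vec A)} (hℓ : VFList A ℓ) (hk : k ≤ ℓ.length) :
    (hstar A φ ∘ₗ insH A φ k K) ω ℓ =
      Ee ω (precH A φ K) (hpr A φ) k ℓ.length hk ℓ.get := by
  show insH A φ k K ω (ℓ.map (hpr A φ)) = _
  rw [insH_map_apply φ (hpr A φ) k K ω ℓ hk]
  exact Ee_congr_b ω _ _ _ k ℓ.length hk ℓ.get
    (fun i => hpr_idem hφ (hget_vf hℓ i))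

lemma val4 (φ : Vec A → Vec A) (k : ℕ) (K : VF A) (ω : SF A) (ℓ : List (Vec A))
    (hk : k ≤ ℓ.length) :
    (insS A k K ∘ₗ hstar A φ) ω ℓ =
      Ee ω (postH A φ K) (hpr A φ) k ℓ.length hk ℓ.get := by
  show insS A k K (hstar A φ ω) ℓ = _
  rw [insS_apply k K _ ℓ hk, Ee_hstar]
  rfl

lemma val5 (φ : Vec A → Vec A) (k : ℕ) (K : VF A) (ω : SF A) (ℓ : List (Vec A))
    (hk : k ≤ ℓ.length) :
    insH A φ k (postH A φ K) ω ℓ =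
      Ee ω (postH A φ K) (hpr A φ) k ℓ.length hk ℓ.get :=
  insH_apply φ k _ ω ℓ hk

lemma val6 {φ : Vec A → Vec A} (hφ : IsConnection A φ) (k : ℕ) (K : VF A) (ω : SF A)
    {ℓ : List (Vec A)} (hℓ : VFList A ℓ) (hk : k ≤ ℓ.length) :
    (insH A φ k K ∘ₗ hstar A φ) ω ℓ =
      Ee ω (postH A φ K) (hpr A φ) k ℓ.length hk ℓ.get := by
  show insH A φ k K (hstar A φ ω) ℓ = _
  rw [insH_apply φ k K _ ℓ hk, Ee_hstar]
  exact Ee_congr_b ω _ _ _ k ℓ.length hk ℓ.get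
    (fun i => hpr_idem hφ (hget_vf hℓ i))

lemma val7 {φ : Vec A → Vec A} (hφ : IsConnection A φ) (k : ℕ) (K : VF A) (ω : SF A)
    {ℓ : List (Vec A)} (hℓ : VFList A ℓ) (hk : k ≤ ℓ.length) :
    (hstar A φ ∘ₗ insS A k K ∘ₗ hstar A φ) ω ℓ =
      Ee ω (postH A φ (precH A φ K)) (hpr A φ) k ℓ.length hk ℓ.get := by
  show insS A k K (hstar A φ ω) (ℓ.map (hpr A φ)) = _
  rw [insS_map_apply (hpr A φ) k K _ ℓ hk, Ee_hstar]
  exact Ee_congr_b ω _ _ _ k ℓ.length hk ℓ.get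
    (fun i => hpr_idem hφ (hget_vf hℓ i))

lemma val8 {φ : Vec A → Vec A} (hφ : IsConnection A φ) (k : ℕ) (K : VF A) (ω : SF A)
    {ℓ : List (Vec A)} (hℓ : VFList A ℓ) (hk : k ≤ ℓ.length) :
    (hstar A φ ∘ₗ insH A φ k K ∘ₗ hstar A φ) ω ℓ =
      Ee ω (postH A φ (precH A φ K)) (hpr A φ) k ℓ.length hk ℓ.get := by
  show insH A φ k K (hstar A φ ω) (ℓ.map (hpr A φ)) = _
  rw [insH_map_apply φ (hpr A φ) k K _ ℓ hk, Ee_hstar]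
  refine Ee_congr_b ω _ _ _ k ℓ.length hk ℓ.get (fun i => ?_)
  have h1 := hget_vf hℓ i
  rw [hpr_idem hφ (vf_hpr hφ h1), hpr_idem hφ h1]

lemma val9 (φ : Vec A → Vec A) (k : ℕ) (K : VF A) (ω : SF A) (ℓ : List (Vec A))
    (hk : k ≤ ℓ.length) :
    insH A φ k (postH A φ (precH A φ K)) ω ℓ =
      Ee ω (postH A φ (precH A φ K)) (hpr A φ) k ℓ.length hk ℓ.get :=
  insH_apply φ k _ ω ℓ hk

end Vals
section Main

variable {A : Type*} [CommRing A] [Algebra ℝ A]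

lemma main_aux (φ : Vec A → Vec A) (hφ : IsConnection A φ)
    (k : ℕ) (K : VF A) (hK : IsVForm A (k + 1) K) :
    (OpEq A (hstar A φ ∘ₗ insS A (k + 1) K) (insH A φ (k + 1) (precH A φ K)) ∧
      OpEq A (insH A φ (k + 1) (precH A φ K)) (hstar A φ ∘ₗ insH A φ (k + 1) K)) ∧
    (OpEq A (insS A (k + 1) K ∘ₗ hstar A φ) (insH A φ (k + 1) (postH A φ K)) ∧
      OpEq A (insH A φ (k + 1) (postH A φ K)) (insH A φ (k + 1) K ∘ₗ hstar A φ)) ∧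
    (OpEq A (insS A (k + 1) K ∘ₗ hstar A φ - hstar A φ ∘ₗ insS A (k + 1) K)
        (insH A φ (k + 1) K ∘ₗ hstar A φ - hstar A φ ∘ₗ insH A φ (k + 1) K) ∧
      OpEq A (insH A φ (k + 1) K ∘ₗ hstar A φ - hstar A φ ∘ₗ insH A φ (k + 1) K)
        (insH A φ (k + 1) (postH A φ K - precH A φ K))) ∧
    (OpEq A (hstar A φ ∘ₗ insS A (k + 1) K ∘ₗ hstar A φ)
        (hstar A φ ∘ₗ insH A φ (k + 1) K ∘ₗ hstar A φ) ∧
      OpEq A (hstar A φ ∘ₗ insH A φ (k + 1) K ∘ₗ hstar A φ)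
        (insH A φ (k + 1) (postH A φ (precH A φ K)))) := by
  have hmapz : ∀ (ℓ : List (Vec A)), ¬ k + 1 ≤ ℓ.length →
      ¬ k + 1 ≤ (ℓ.map (hpr A φ)).length := fun ℓ h => by simpa using h
  refine ⟨⟨?_, ?_⟩, ⟨?_, ?_⟩, ⟨?_, ?_⟩, ⟨?_, ?_⟩⟩ <;> intro p ω hω ℓ hℓ
  · by_cases hk : k + 1 ≤ ℓ.length
    · exact (val1 φ _ K ω ℓ hk).trans (val2 φ _ K ω ℓ hk).symm
    · show insS A (k + 1) K ω (ℓ.map (hpr A φ)) = _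
      rw [insS_zero _ _ _ _ (hmapz ℓ hk), insH_zero _ _ _ _ _ hk]
  · by_cases hk : k + 1 ≤ ℓ.length
    · exact (val2 φ _ K ω ℓ hk).trans (val3 hφ _ K ω hℓ hk).symm
    · show _ = insH A φ (k + 1) K ω (ℓ.map (hpr A φ))
      rw [insH_zero _ _ _ _ _ (hmapz ℓ hk), insH_zero _ _ _ _ _ hk]
  · by_cases hk : k + 1 ≤ ℓ.length
    · exact (val4 φ _ K ω ℓ hk).trans (val5 φ _ K ω ℓ hk).symm
    · show insS A (k + 1) K (hstar A φ ω) ℓ = _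
      rw [insS_zero _ _ _ _ hk, insH_zero _ _ _ _ _ hk]
  · by_cases hk : k + 1 ≤ ℓ.length
    · exact (val5 φ _ K ω ℓ hk).trans (val6 hφ _ K ω hℓ hk).symm
    · show _ = insH A φ (k + 1) K (hstar A φ ω) ℓ
      rw [insH_zero _ _ _ _ _ hk, insH_zero _ _ _ _ _ hk]
  · simp only [LinearMap.sub_apply, Pi.sub_apply]
    by_cases hk : k + 1 ≤ ℓ.length
    · rw [val4 φ _ K ω ℓ hk, val1 φ _ K ω ℓ hk, val6 hφ _ K ω hℓ hk,
        val3 hφ _ K ω hℓ hk]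
    · have e1 : (insS A (k + 1) K ∘ₗ hstar A φ) ω ℓ = 0 := insS_zero _ _ _ _ hk
      have e2 : (hstar A φ ∘ₗ insS A (k + 1) K) ω ℓ = 0 :=
        insS_zero _ _ _ _ (hmapz ℓ hk)
      have e3 : (insH A φ (k + 1) K ∘ₗ hstar A φ) ω ℓ = 0 := insH_zero _ _ _ _ _ hk
      have e4 : (hstar A φ ∘ₗ insH A φ (k + 1) K) ω ℓ = 0 :=
        insH_zero _ _ _ _ _ (hmapz ℓ hk)
      rw [e1, e2, e3, e4]
  · simp only [LinearMap.sub_apply, Pi.sub_apply]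
    by_cases hk : k + 1 ≤ ℓ.length
    · rw [val6 hφ _ K ω hℓ hk, val3 hφ _ K ω hℓ hk,
        insH_apply φ (k + 1) _ ω ℓ hk]
      refine (Ee_sub hω (postH A φ K) (precH A φ K) ?_ ?_ (hpr A φ) (k + 1)
        ℓ.length hk ℓ.get ?_ ?_).symm
      · exact fun L hL => vf_hpr hφ (hK.vec L hL)
      · exact fun L hL => hK.vec _ (fun X hX => by
          rw [List.mem_map] at hX
          obtain ⟨Y, hY, rfl⟩ := hX
          exact vf_hpr hφ (hL Y hY))
      · exact fun i => hget_vf hℓ i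
      · exact fun i => vf_hpr hφ (hget_vf hℓ i)
    · have e3 : (insH A φ (k + 1) K ∘ₗ hstar A φ) ω ℓ = 0 := insH_zero _ _ _ _ _ hk
      have e4 : (hstar A φ ∘ₗ insH A φ (k + 1) K) ω ℓ = 0 :=
        insH_zero _ _ _ _ _ (hmapz ℓ hk)
      rw [e3, e4, insH_zero _ _ _ _ _ hk, sub_zero]
  · by_cases hk : k + 1 ≤ ℓ.length
    · exact (val7 hφ _ K ω hℓ hk).trans (val8 hφ _ K ω hℓ hk).symm
    · show insS A (k + 1) K (hstar A φ ω) (ℓ.map (hpr A φ)) =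
        insH A φ (k + 1) K (hstar A φ ω) (ℓ.map (hpr A φ))
      rw [insS_zero _ _ _ _ (hmapz ℓ hk), insH_zero _ _ _ _ _ (hmapz ℓ hk)]
  · by_cases hk : k + 1 ≤ ℓ.length
    · exact (val8 hφ _ K ω hℓ hk).trans (val9 φ _ K ω ℓ hk).symm
    · show insH A φ (k + 1) K (hstar A φ ω) (ℓ.map (hpr A φ)) = _
      rw [insH_zero _ _ _ _ _ (hmapz ℓ hk), insH_zero _ _ _ _ _ hk]

end Main
/-- **Lemma 2.3.4.**  For `K ∈ Ω^{k+1}(M;TM)` the following identities of operators on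
`Ω(M)` hold: `h* ∘ i(K) = i^h(K ∘ Λ^{k+1}h) = h* ∘ i^h(K)`;
`i(K) ∘ h* = i^h(h ∘ K) = i^h(K) ∘ h*`;
`[i(K), h*] = [i^h(K), h*] = i^h(h ∘ K - K ∘ Λ^{k+1}h)`; and
`h* ∘ i(K) ∘ h* = h* ∘ i^h(K) ∘ h* = i^h(h ∘ K ∘ Λ^{k+1}h)`. -/
theorem insertion_hstar_relations
    {EM : Type*} [NormedAddCommGroup EM] [NormedSpace ℝ EM]
    {HM : Type*} [TopologicalSpace HM] {IM : ModelWithCorners ℝ EM HM}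
    {M : Type*} [TopologicalSpace M] [ChartedSpace HM M] [IsManifold IM (⊤ : ℕ∞) M]
    (φ : Vec (SmoothFns IM M) → Vec (SmoothFns IM M))
    (hφ : IsConnection (SmoothFns IM M) φ)
    (k : ℕ) (K : VF (SmoothFns IM M)) (hK : IsVForm (SmoothFns IM M) (k + 1) K) :
    (OpEq (SmoothFns IM M) (hstar (SmoothFns IM M) φ ∘ₗ insS (SmoothFns IM M) (k + 1) K) (insH (SmoothFns IM M) φ (k + 1) (precH (SmoothFns IM M) φ K)) ∧
      OpEq (SmoothFns IM M) (insH (SmoothFns IM M) φ (k + 1) (precH (SmoothFns IM M) φ K)) (hstar (SmoothFns IM M) φ ∘ₗ insH (SmoothFns IM M) φ (k + 1) K)) ∧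
    (OpEq (SmoothFns IM M) (insS (SmoothFns IM M) (k + 1) K ∘ₗ hstar (SmoothFns IM M) φ) (insH (SmoothFns IM M) φ (k + 1) (postH (SmoothFns IM M) φ K)) ∧
      OpEq (SmoothFns IM M) (insH (SmoothFns IM M) φ (k + 1) (postH (SmoothFns IM M) φ K)) (insH (SmoothFns IM M) φ (k + 1) K ∘ₗ hstar (SmoothFns IM M) φ)) ∧
    (OpEq (SmoothFns IM M) (insS (SmoothFns IM M) (k + 1) K ∘ₗ hstar (SmoothFns IM M) φ - hstar (SmoothFns IM M) φ ∘ₗ insS (SmoothFns IM M) (k + 1) K)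
        (insH (SmoothFns IM M) φ (k + 1) K ∘ₗ hstar (SmoothFns IM M) φ - hstar (SmoothFns IM M) φ ∘ₗ insH (SmoothFns IM M) φ (k + 1) K) ∧
      OpEq (SmoothFns IM M) (insH (SmoothFns IM M) φ (k + 1) K ∘ₗ hstar (SmoothFns IM M) φ - hstar (SmoothFns IM M) φ ∘ₗ insH (SmoothFns IM M) φ (k + 1) K)
        (insH (SmoothFns IM M) φ (k + 1) (postH (SmoothFns IM M) φ K - precH (SmoothFns IM M) φ K))) ∧
    (OpEq (SmoothFns IM M) (hstar (SmoothFns IM M) φ ∘ₗ insS (SmoothFns IM M) (k + 1) K ∘ₗ hstar (SmoothFns IM M) φ)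
        (hstar (SmoothFns IM M) φ ∘ₗ insH (SmoothFns IM M) φ (k + 1) K ∘ₗ hstar (SmoothFns IM M) φ) ∧
      OpEq (SmoothFns IM M) (hstar (SmoothFns IM M) φ ∘ₗ insH (SmoothFns IM M) φ (k + 1) K ∘ₗ hstar (SmoothFns IM M) φ)
        (insH (SmoothFns IM M) φ (k + 1) (postH (SmoothFns IM M) φ (precH (SmoothFns IM M) φ K)))) := by
  exact main_aux φ hφ k K hK
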